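/- Let H₁,…,H_N and K₁,…,K_M be finite-dimensional Hilbert spaces, and let Γ_k : Z → B(H_k), Ω_r : Z → B(K_r) be unital self-adjoint linear maps on a finite-dimensional *-vector space Z with unit, such that each Γ_k(Z) and each Ω_r(Z) is irreducible, and such that the weak separation property holds: any two of the M+N coordinate maps can be distinguished by the norm of some matrix over Z. Then the C*-algebra generated by S_{Γ,Ω} = {Γ₁(z)⊕…⊕Γ_N(z)⊕Ω₁(z)⊕…⊕Ω_M(z) : z ∈ Z} is the full direct sum B(H₁)⊕…⊕B(H_N)⊕B(K₁)⊕…⊕B(K_M). -/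

import Mathlib

/-- The operator on the `ℓ²` direct sum of `p` copies of `E` determined by a `p × p`
matrix of operators on `E`. -/
noncomputable def matOp {E : Type*} [NormedAddCommGroup E] [InnerProductSpace ℂ E]
    [FiniteDimensional ℂ E] {p : ℕ} (M : Matrix (Fin p) (Fin p) (E →L[ℂ] E)) :
    PiLp 2 (fun _ : Fin p => E) →L[ℂ] PiLp 2 (fun _ : Fin p => E) :=
  LinearMap.toContinuousLinearMap
    { toFun := fun v => WithLp.toLp 2 (fun i => ∑ j, M i j (v j))
      map_add' := by
        intro v w; apply WithLp.ofLp_injective; funext i; simp [Finset.sum_add_distrib]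
      map_smul' := by
        intro c v; apply WithLp.ofLp_injective; funext i; simp [Finset.smul_sum] }

/-- The block-diagonal operator `T₁ ⊕ ⋯ ⊕ T_N ⊕ R₁ ⊕ ⋯ ⊕ R_M` on the `ℓ²` direct sum
`H₁ ⊕ ⋯ ⊕ H_N ⊕ K₁ ⊕ ⋯ ⊕ K_M`. -/
noncomputable def combOp {N M : ℕ} {H : Fin N → Type*} [∀ k, NormedAddCommGroup (H k)]
    [∀ k, InnerProductSpace ℂ (H k)] [∀ k, FiniteDimensional ℂ (H k)]
    {K : Fin M → Type*} [∀ r, NormedAddCommGroup (K r)]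
    [∀ r, InnerProductSpace ℂ (K r)] [∀ r, FiniteDimensional ℂ (K r)]
    (T : ∀ k, H k →L[ℂ] H k) (R : ∀ r, K r →L[ℂ] K r) :
    WithLp 2 (PiLp 2 H × PiLp 2 K) →L[ℂ] WithLp 2 (PiLp 2 H × PiLp 2 K) :=
  LinearMap.toContinuousLinearMap
    { toFun := fun v => WithLp.toLp 2 ((WithLp.toLp 2 (fun k => T k (v.ofLp.1 k)),
          WithLp.toLp 2 (fun r => R r (v.ofLp.2 r))) : PiLp 2 H × PiLp 2 K)
      map_add' := by
        intro v w; apply WithLp.ofLp_injective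
        refine Prod.ext ?_ ?_ <;> apply WithLp.ofLp_injective <;> funext i <;> simp
      map_smul' := by
        intro c v; apply WithLp.ofLp_injective
        refine Prod.ext ?_ ?_ <;> apply WithLp.ofLp_injective <;> funext i <;> simp }

noncomputable section

set_option linter.unusedSectionVars false
namespace StmtAux

open ContinuousLinearMap

variable {E F : Type*} [NormedAddCommGroup E] [InnerProductSpace ℂ E] [FiniteDimensional ℂ E]
  [NormedAddCommGroup F] [InnerProductSpace ℂ F] [FiniteDimensional ℂ F]

@[simp] lemma matOp_apply {p : ℕ} (M : Matrix (Fin p) (Fin p) (E →L[ℂ] E))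
    (v : PiLp 2 (fun _ : Fin p => E)) (i : Fin p) :
    matOp M v i = ∑ j, M i j (v j) := rfl

/-- Componentwise operator on an `ℓ²` power. -/
def compwise {p : ℕ} (S : F →L[ℂ] E) :
    PiLp 2 (fun _ : Fin p => F) →L[ℂ] PiLp 2 (fun _ : Fin p => E) :=
  LinearMap.toContinuousLinearMap
    { toFun := fun v => WithLp.toLp 2 (fun i => S (v i))
      map_add' := by intro v w; apply WithLp.ofLp_injective; funext i; simp
      map_smul' := by intro c v; apply WithLp.ofLp_injective; funext i; simp }

@[simp] lemma compwise_apply {p : ℕ} (S : F →L[ℂ] E)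
    (v : PiLp 2 (fun _ : Fin p => F)) (i : Fin p) : compwise S v i = S (v i) := rfl

lemma compwise_norm {p : ℕ} (S : F →L[ℂ] E) {κ : ℝ} (hκ : 0 ≤ κ)
    (h : ∀ x, ‖S x‖ = κ * ‖x‖) (v : PiLp 2 (fun _ : Fin p => F)) :
    ‖compwise S v‖ = κ * ‖v‖ := by
  rw [PiLp.norm_eq_of_L2, PiLp.norm_eq_of_L2]
  simp only [compwise_apply, h, mul_pow]
  rw [← Finset.mul_sum, Real.sqrt_mul (by positivity), Real.sqrt_sq hκ]

lemma norm_le_of_intertwine {p : ℕ} {A : PiLp 2 (fun _ : Fin p => E) →L[ℂ] PiLp 2 (fun _ : Fin p => E)}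
    {B : PiLp 2 (fun _ : Fin p => F) →L[ℂ] PiLp 2 (fun _ : Fin p => F)}
    {S : F →L[ℂ] E} {κ : ℝ} (hκ : 0 < κ) (h : ∀ x, ‖S x‖ = κ * ‖x‖)
    (hAB : A ∘L compwise S = compwise S ∘L B) : ‖B‖ ≤ ‖A‖ := by
  refine opNorm_le_bound _ (norm_nonneg A) fun v => ?_
  have h1 : ‖compwise S (B v)‖ = ‖A (compwise S v)‖ := by
    rw [← comp_apply, ← comp_apply, hAB]
  have h2 := compwise_norm S hκ.le h (B v)
  have h3 := compwise_norm S hκ.le h v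
  have h4 : ‖A (compwise S v)‖ ≤ ‖A‖ * ‖compwise S v‖ := le_opNorm A _
  rw [h3] at h4
  nlinarith [norm_nonneg (B v), norm_nonneg v, norm_nonneg A]

/-- If `S† S` acts as the scalar `c` and `S ≠ 0`, then `S` is a positive multiple of an
isometry. -/
lemma exists_norm_smul [Nontrivial F] (S : F →L[ℂ] E) (hS0 : S ≠ 0) (c : ℂ)
    (h : ∀ x, adjoint S (S x) = c • x) :
    ∃ κ : ℝ, 0 < κ ∧ ∀ x, ‖S x‖ = κ * ‖x‖ := by
  have key : ∀ x : F, ((‖S x‖ : ℂ))^2 = (starRingEnd ℂ) c * (‖x‖ : ℂ)^2 := by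
    intro x
    have h1 : (inner ℂ (S x) (S x) : ℂ) = inner ℂ (adjoint S (S x)) x :=
      (adjoint_inner_left S x (S x)).symm
    rw [h x, inner_smul_left, inner_self_eq_norm_sq_to_K, inner_self_eq_norm_sq_to_K] at h1
    exact h1
  -- c is a nonnegative real
  obtain ⟨x₀, hx₀⟩ : ∃ x : F, x ≠ 0 := exists_ne 0
  have hnx₀ : (0:ℝ) < ‖x₀‖ := norm_pos_iff.mpr hx₀
  set t : ℝ := (‖S x₀‖ / ‖x₀‖)^2 with ht
  have h0 : ((‖x₀‖:ℂ))^2 ≠ 0 := pow_ne_zero _ (by exact_mod_cast hnx₀.ne')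
  have hct : (starRingEnd ℂ) c = (t : ℂ) := by
    have hkey := key x₀
    rw [ht]
    push_cast
    rw [div_pow, eq_div_iff h0]
    linear_combination -hkey
  have hc : c = (t : ℂ) := by
    have := congrArg (starRingEnd ℂ) hct
    simpa using this
  have key2 : ∀ x : F, ‖S x‖^2 = t * ‖x‖^2 := by
    intro x
    have := key x
    rw [hct] at this
    exact_mod_cast this
  have ht0 : t ≠ 0 := by
    intro h0
    apply hS0
    ext x
    have := key2 x
    rw [h0, zero_mul, pow_eq_zero_iff (by norm_num)] at this
    simpa [norm_eq_zero] using this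
  have htpos : 0 < t := lt_of_le_of_ne (by positivity) (Ne.symm ht0)
  refine ⟨Real.sqrt t, Real.sqrt_pos.mpr htpos, fun x => ?_⟩
  have := key2 x
  have : ‖S x‖ = Real.sqrt (t * ‖x‖^2) := by
    rw [← this, Real.sqrt_sq (norm_nonneg _)]
  rw [this, Real.sqrt_mul htpos.le, Real.sqrt_sq (norm_nonneg _)]

end StmtAux

section
open ContinuousLinearMap
variable {E F : Type*} [NormedAddCommGroup E] [InnerProductSpace ℂ E] [FiniteDimensional ℂ E]
  [NormedAddCommGroup F] [InnerProductSpace ℂ F] [FiniteDimensional ℂ F]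

namespace StmtAux

lemma matOp_comp_compwise {Z : Type*} [AddCommGroup Z] [Module ℂ Z]
    (φ : Z →ₗ[ℂ] (E →L[ℂ] E)) (ψ : Z →ₗ[ℂ] (F →L[ℂ] F)) (S : F →L[ℂ] E)
    (hS : ∀ z x, φ z (S x) = S (ψ z x)) {p : ℕ} (zm : Matrix (Fin p) (Fin p) Z) :
    matOp (zm.map φ) ∘L compwise S = compwise S ∘L matOp (zm.map ψ) := by
  ext v i
  simp only [comp_apply, matOp_apply, compwise_apply, Matrix.map_apply, hS, ← map_sum]

/-- Schur-type vanishing: a nonzero intertwiner between two irreducible self-adjoint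
families forces equality of all matrix norms; under weak separation it must vanish. -/
lemma schur_vanish {Z : Type*} [AddCommGroup Z] [Module ℂ Z] [StarAddMonoid Z]
    [Nontrivial E] [Nontrivial F]
    (φ : Z →ₗ[ℂ] (E →L[ℂ] E)) (ψ : Z →ₗ[ℂ] (F →L[ℂ] F))
    (hφstar : ∀ z, φ (star z) = star (φ z)) (hψstar : ∀ z, ψ (star z) = star (ψ z))
    (hφirr : ∀ T : E →L[ℂ] E, (∀ z, T * φ z = φ z * T) → ∃ c : ℂ, T = c • (1 : E →L[ℂ] E))
    (hψirr : ∀ T : F →L[ℂ] F, (∀ z, T * ψ z = ψ z * T) → ∃ c : ℂ, T = c • (1 : F →L[ℂ] F))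
    (hsep : ∃ p : ℕ, ∃ zm : Matrix (Fin p) (Fin p) Z,
      ‖matOp (zm.map φ)‖ ≠ ‖matOp (zm.map ψ)‖)
    (S : F →L[ℂ] E) (hS : ∀ z x, φ z (S x) = S (ψ z x)) : S = 0 := by
  by_contra hS0
  obtain ⟨p, zm, hne⟩ := hsep
  apply hne
  -- the reversed intertwining for the adjoint
  have hS' : ∀ z y, ψ z (adjoint S y) = adjoint S (φ z y) := by
    intro z y
    have h1 : φ (star z) ∘L S = S ∘L ψ (star z) := by
      ext x; simpa using hS (star z) x
    rw [hφstar, hψstar] at h1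
    have h2 := congrArg adjoint h1
    rw [adjoint_comp, adjoint_comp, star_eq_adjoint, star_eq_adjoint,
      adjoint_adjoint, adjoint_adjoint] at h2
    calc ψ z (adjoint S y) = ((ψ z).comp (adjoint S)) y := rfl
    _ = ((adjoint S).comp (φ z)) y := by rw [h2]
    _ = adjoint S (φ z y) := rfl
  -- S† S is scalar
  obtain ⟨c', hc'⟩ := hψirr (adjoint S ∘L S) (by
    intro z; ext x
    simp only [mul_apply_eq_comp, comp_apply]
    rw [← hS z x, ← hS' z (S x)])
  obtain ⟨c, hc⟩ := hφirr (S ∘L adjoint S) (by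
    intro z; ext x
    simp only [mul_apply_eq_comp, comp_apply]
    rw [← hS' z x, ← hS z (adjoint S x)])
  have hSadj0 : adjoint S ≠ 0 := by
    intro h0
    apply hS0
    rw [← adjoint_adjoint S, h0, map_zero]
  obtain ⟨κ, hκpos, hκ⟩ := exists_norm_smul S hS0 c' (by
    intro x
    have := congrFun (congrArg DFunLike.coe hc') x
    simpa using this)
  obtain ⟨κ₂, hκ₂pos, hκ₂⟩ := exists_norm_smul (adjoint S) hSadj0 c (by
    intro x
    rw [adjoint_adjoint]
    have := congrFun (congrArg DFunLike.coe hc) x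
    simpa using this)
  have h1 : ‖matOp (zm.map ψ)‖ ≤ ‖matOp (zm.map φ)‖ :=
    norm_le_of_intertwine hκpos hκ (matOp_comp_compwise φ ψ S hS zm)
  have h2 : ‖matOp (zm.map φ)‖ ≤ ‖matOp (zm.map ψ)‖ :=
    norm_le_of_intertwine hκ₂pos hκ₂
      (matOp_comp_compwise ψ φ (adjoint S) (fun z x => (hS' z x)) zm)
  exact le_antisymm h2 h1

end StmtAux
end

section
open ContinuousLinearMap
variable {V : Type*} [NormedAddCommGroup V] [InnerProductSpace ℂ V] [FiniteDimensional ℂ V]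

namespace StmtAux

def iotaP {p : ℕ} (j : Fin p) : V →L[ℂ] PiLp 2 (fun _ : Fin p => V) :=
  LinearMap.toContinuousLinearMap
    { toFun := fun x => WithLp.toLp 2 (fun i => if i = j then x else 0)
      map_add' := by
        intro x y; apply WithLp.ofLp_injective; funext i; by_cases h : i = j <;> simp [h]
      map_smul' := by
        intro c x; apply WithLp.ofLp_injective; funext i; by_cases h : i = j <;> simp [h] }

@[simp] lemma iotaP_apply {p : ℕ} (j : Fin p) (x : V) (i : Fin p) :
    iotaP j x i = if i = j then x else 0 := rfl

def projP {p : ℕ} (i : Fin p) : PiLp 2 (fun _ : Fin p => V) →L[ℂ] V :=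
  LinearMap.toContinuousLinearMap
    { toFun := fun v => v i
      map_add' := fun _ _ => rfl
      map_smul' := fun _ _ => rfl }

@[simp] lemma projP_apply {p : ℕ} (i : Fin p) (v : PiLp 2 (fun _ : Fin p => V)) :
    projP i v = v i := rfl

lemma sum_apply_piLp {p m : ℕ} (f : Fin m → PiLp 2 (fun _ : Fin p => V)) (i : Fin p) :
    (∑ j, f j) i = ∑ j, f j i := by
  exact map_sum (projP (V := V) i) f Finset.univ

lemma sum_iotaP {p : ℕ} (w : PiLp 2 (fun _ : Fin p => V)) : ∑ j, iotaP j (w j) = w := by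
  refine PiLp.ext fun i => ?_
  have h : projP (V := V) i (∑ j, iotaP j (w j)) = w i := by
    rw [map_sum]; simp
  exact h

lemma compwise_mul {p : ℕ} (a c : V →L[ℂ] V) :
    (compwise (p := p) a) * compwise c = compwise (a * c) := by
  ext w i; simp [mul_apply_eq_comp]

lemma compwise_one {p : ℕ} : compwise (p := p) (1 : V →L[ℂ] V) = 1 := by
  ext w i; simp

lemma compwise_add' {E F : Type*} [NormedAddCommGroup E] [InnerProductSpace ℂ E]
    [FiniteDimensional ℂ E] [NormedAddCommGroup F] [InnerProductSpace ℂ F]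
    [FiniteDimensional ℂ F] {p : ℕ} (a c : F →L[ℂ] E) :
    compwise (p := p) (a + c) = compwise a + compwise c := by
  ext w i; simp [add_apply]

lemma compwise_smul' {E F : Type*} [NormedAddCommGroup E] [InnerProductSpace ℂ E]
    [FiniteDimensional ℂ E] [NormedAddCommGroup F] [InnerProductSpace ℂ F]
    [FiniteDimensional ℂ F] {p : ℕ} (r : ℂ) (a : F →L[ℂ] E) :
    compwise (p := p) (r • a) = r • compwise a := by
  ext w i; simp

lemma compwise_adjoint {E F : Type*} [NormedAddCommGroup E] [InnerProductSpace ℂ E]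
    [FiniteDimensional ℂ E] [NormedAddCommGroup F] [InnerProductSpace ℂ F]
    [FiniteDimensional ℂ F] {p : ℕ} (S : F →L[ℂ] E) :
    adjoint (compwise (p := p) S) = compwise (adjoint S) := by
  symm
  rw [eq_adjoint_iff]
  intro x y
  simp [PiLp.inner_apply, adjoint_inner_left]

/-- Step (a) of the double commutant theorem. -/
lemma dct_aux (A : StarSubalgebra ℂ (V →L[ℂ] V)) (T : V →L[ℂ] V)
    (hT : ∀ S : V →L[ℂ] V, (∀ a ∈ A, a * S = S * a) → T * S = S * T) (v : V) :
    ∃ a ∈ A, T v = a v := by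
  set W : Submodule ℂ V :=
    { carrier := {w | ∃ a ∈ A, a v = w}
      add_mem' := by rintro _ _ ⟨a, ha, rfl⟩ ⟨c, hc, rfl⟩; exact ⟨a + c, add_mem ha hc, rfl⟩
      zero_mem' := ⟨0, zero_mem _, rfl⟩
      smul_mem' := by
        rintro r _ ⟨a, ha, rfl⟩
        exact ⟨algebraMap ℂ _ r * a, mul_mem (algebraMap_mem A r) ha, by
          simp [Algebra.smul_def]⟩ } with hWdef
  set P : V →L[ℂ] V := W.starProjection with hPdef
  have hPmem : ∀ x, P x ∈ W := fun x => W.starProjection_apply_mem x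
  have hPid : ∀ w ∈ W, P w = w := fun w hw => by
    rw [hPdef]
    exact Submodule.starProjection_eq_self_iff.mpr hw
  have hPsa : IsSelfAdjoint P := by rw [hPdef]; exact isSelfAdjoint_starProjection W
  have hinv : ∀ a ∈ A, ∀ x, a (P x) ∈ W := by
    intro a ha x
    obtain ⟨c, hc, hcv⟩ := hPmem x
    exact ⟨a * c, mul_mem ha hc, by rw [mul_apply_eq_comp, hcv]⟩
  have haP : ∀ a ∈ A, P * (a * P) = a * P := by
    intro a ha; ext x
    exact hPid _ (hinv a ha x)
  have hcomm : ∀ a ∈ A, a * P = P * a := by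
    intro a ha
    have h1 := haP a ha
    have h2 := haP (star a) (star_mem ha)
    have h3 : P * a * P = P * a := by
      have h4 := congrArg star h2
      simpa [star_mul, star_star, hPsa.star_eq] using h4
    calc a * P = P * (a * P) := h1.symm
    _ = P * a * P := by rw [mul_assoc]
    _ = P * a := h3
  have hTP : T * P = P * T := hT P hcomm
  have hvW : v ∈ W := ⟨1, one_mem A, by simp⟩
  have hTv : T v = P (T v) := by
    conv_lhs => rw [← hPid v hvW]
    calc T (P v) = (T * P) v := rfl
    _ = (P * T) v := by rw [hTP]
    _ = P (T v) := rfl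
  obtain ⟨a, ha, hav⟩ := hPmem (T v)
  exact ⟨a, ha, by rw [hTv, ← hav]⟩

/-- The double commutant theorem in finite dimensions: a unital star subalgebra of
`B(V)` containing every operator commuting with its commutant is everything it needs
to be; precisely, any `T` commuting with the commutant of `A` lies in `A`. -/
lemma dct (A : StarSubalgebra ℂ (V →L[ℂ] V)) (T : V →L[ℂ] V)
    (hT : ∀ S : V →L[ℂ] V, (∀ a ∈ A, a * S = S * a) → T * S = S * T) : T ∈ A := by
  classical
  set n := Module.finrank ℂ V with hn
  let b : Module.Basis (Fin n) ℂ V := Module.finBasis ℂ V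
  let An : StarSubalgebra ℂ
      (PiLp 2 (fun _ : Fin n => V) →L[ℂ] PiLp 2 (fun _ : Fin n => V)) :=
    { carrier := {x | ∃ a ∈ A, x = compwise a}
      mul_mem' := by
        rintro _ _ ⟨a, ha, rfl⟩ ⟨c, hc, rfl⟩
        exact ⟨a * c, mul_mem ha hc, (compwise_mul a c).symm⟩
      one_mem' := ⟨1, one_mem A, compwise_one.symm⟩
      add_mem' := by
        rintro _ _ ⟨a, ha, rfl⟩ ⟨c, hc, rfl⟩
        exact ⟨a + c, add_mem ha hc, (compwise_add' a c).symm⟩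
      zero_mem' := ⟨0, zero_mem _, by
        ext w i; simp⟩
      algebraMap_mem' := by
        intro r
        refine ⟨algebraMap ℂ _ r, algebraMap_mem A r, ?_⟩
        rw [Algebra.algebraMap_eq_smul_one, Algebra.algebraMap_eq_smul_one,
          compwise_smul', compwise_one]
      star_mem' := by
        rintro _ ⟨a, ha, rfl⟩
        exact ⟨star a, star_mem ha, by
          rw [star_eq_adjoint, star_eq_adjoint, compwise_adjoint]⟩ }
  have hTn : ∀ S' : PiLp 2 (fun _ : Fin n => V) →L[ℂ] PiLp 2 (fun _ : Fin n => V),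
      (∀ x ∈ An, x * S' = S' * x) → compwise T * S' = S' * compwise T := by
    intro S' hS'
    have hS'p : ∀ a ∈ A, ∀ w, compwise a (S' w) = S' (compwise a w) := by
      intro a ha w
      have h := hS' (compwise a) ⟨a, ha, rfl⟩
      have h2 := congrFun (congrArg DFunLike.coe h) w
      simpa [mul_apply_eq_comp] using h2
    -- blocks of S' lie in the commutant of A
    have hblock : ∀ i j : Fin n, ∀ a ∈ A,
        a * (projP i ∘L S' ∘L iotaP j) = (projP i ∘L S' ∘L iotaP j) * a := by
      intro i j a ha
      ext x
      have h1 : compwise a (S' (iotaP j x)) = S' (compwise a (iotaP j x)) := hS'p a ha _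
      have h2 : compwise a (iotaP j x) = iotaP j (a x) := by
        refine PiLp.ext fun m => ?_; simp only [compwise_apply, iotaP_apply]
        by_cases hm : m = j <;> simp [hm]
      have h3 := congrArg (fun u => u i) h1
      simp only [compwise_apply, h2] at h3
      simpa [mul_apply_eq_comp, comp_apply] using h3
    have hTblock : ∀ i j : Fin n,
        T * (projP i ∘L S' ∘L iotaP j) = (projP i ∘L S' ∘L iotaP j) * T :=
      fun i j => hT _ (hblock i j)
    ext w i
    have hdec : ∀ u : PiLp 2 (fun _ : Fin n => V), S' u = ∑ j, S' (iotaP j (u j)) := by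
      intro u
      conv_lhs => rw [← sum_iotaP u]
      rw [map_sum]
    have key : ∀ j, T ((S' (iotaP j (w j))) i) = (S' (iotaP j (T (w j)))) i := by
      intro j
      have h := congrFun (congrArg DFunLike.coe (hTblock i j)) (w j)
      simpa [mul_apply_eq_comp, comp_apply] using h
    show T ((S' w) i) = (S' (compwise T w)) i
    conv_rhs => rw [hdec (compwise T w), sum_apply_piLp]
    rw [hdec w, sum_apply_piLp, map_sum]
    simp only [key, compwise_apply]
  obtain ⟨x, hx, hxw⟩ := dct_aux An (compwise T) hTn (WithLp.toLp 2 fun i => b i)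
  obtain ⟨a, ha, rfl⟩ := hx
  have hba : ∀ i, T (b i) = a (b i) := by
    intro i
    exact congrArg (fun u => u i) hxw
  have hTa : (T : V →ₗ[ℂ] V) = (a : V →ₗ[ℂ] V) := Module.Basis.ext b hba
  have : T = a := ContinuousLinearMap.coe_injective hTa
  rw [this]; exact ha

end StmtAux
end

section
open ContinuousLinearMap

namespace StmtAux

variable {N M : ℕ} {H : Fin N → Type*} [∀ k, NormedAddCommGroup (H k)]
    [∀ k, InnerProductSpace ℂ (H k)] [∀ k, FiniteDimensional ℂ (H k)]
    {K : Fin M → Type*} [∀ r, NormedAddCommGroup (K r)]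
    [∀ r, InnerProductSpace ℂ (K r)] [∀ r, FiniteDimensional ℂ (K r)]

def projH (i : Fin N) : WithLp 2 (PiLp 2 H × PiLp 2 K) →L[ℂ] H i :=
  LinearMap.toContinuousLinearMap
    { toFun := fun v => v.ofLp.1 i
      map_add' := fun _ _ => rfl
      map_smul' := fun _ _ => rfl }

def projK (s : Fin M) : WithLp 2 (PiLp 2 H × PiLp 2 K) →L[ℂ] K s :=
  LinearMap.toContinuousLinearMap
    { toFun := fun v => v.ofLp.2 s
      map_add' := fun _ _ => rfl
      map_smul' := fun _ _ => rfl }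

lemma projH_apply (i : Fin N) (v : WithLp 2 (PiLp 2 H × PiLp 2 K)) :
    projH i v = v.ofLp.1 i := rfl

lemma projK_apply (s : Fin M) (v : WithLp 2 (PiLp 2 H × PiLp 2 K)) :
    projK s v = v.ofLp.2 s := rfl

def iotaH (k : Fin N) : H k →L[ℂ] WithLp 2 (PiLp 2 H × PiLp 2 K) :=
  LinearMap.toContinuousLinearMap
    { toFun := fun x => WithLp.toLp 2
          ((WithLp.toLp 2 (Pi.single k x : ∀ i, H i) : PiLp 2 H), (0 : PiLp 2 K))
      map_add' := by
        intro x y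
        apply WithLp.ofLp_injective
        refine Prod.ext ?_ ?_
        · exact WithLp.ofLp_injective 2 (Pi.single_add k x y)
        · exact (add_zero (0 : PiLp 2 K)).symm
      map_smul' := by
        intro c x
        apply WithLp.ofLp_injective
        refine Prod.ext ?_ ?_
        · exact WithLp.ofLp_injective 2 (Pi.single_smul k c x)
        · exact (smul_zero c).symm }

def iotaK (r : Fin M) : K r →L[ℂ] WithLp 2 (PiLp 2 H × PiLp 2 K) :=
  LinearMap.toContinuousLinearMap
    { toFun := fun x => WithLp.toLp 2
          ((0 : PiLp 2 H), (WithLp.toLp 2 (Pi.single r x : ∀ s, K s) : PiLp 2 K))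
      map_add' := by
        intro x y
        apply WithLp.ofLp_injective
        refine Prod.ext ?_ ?_
        · exact (add_zero (0 : PiLp 2 H)).symm
        · exact WithLp.ofLp_injective 2 (Pi.single_add r x y)
      map_smul' := by
        intro c x
        apply WithLp.ofLp_injective
        refine Prod.ext ?_ ?_
        · exact (smul_zero c).symm
        · exact WithLp.ofLp_injective 2 (Pi.single_smul r c x) }

@[simp] lemma projH_iotaH_same (k : Fin N) (x : H k) :
    projH (K := K) k (iotaH k x) = x := Pi.single_eq_same k x

lemma projH_iotaH_ne {i j : Fin N} (h : i ≠ j) (x : H j) :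
    projH (K := K) i (iotaH j x) = 0 := Pi.single_eq_of_ne h x

@[simp] lemma projK_iotaK_same (r : Fin M) (x : K r) :
    projK (H := H) r (iotaK r x) = x := Pi.single_eq_same r x

lemma projK_iotaK_ne {r s : Fin M} (h : r ≠ s) (x : K s) :
    projK (H := H) r (iotaK s x) = 0 := Pi.single_eq_of_ne h x

@[simp] lemma projH_iotaK (i : Fin N) (r : Fin M) (x : K r) :
    projH (H := H) i (iotaK r x) = 0 := rfl

@[simp] lemma projK_iotaH (s : Fin M) (k : Fin N) (x : H k) :
    projK (K := K) s (iotaH k x) = 0 := rfl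

lemma decompV (v : WithLp 2 (PiLp 2 H × PiLp 2 K)) :
    (∑ k, iotaH k (v.ofLp.1 k)) + ∑ r, iotaK r (v.ofLp.2 r) = v := by
  apply WithLp.ofLp_injective
  refine Prod.ext ?_ ?_
  · refine PiLp.ext fun i => ?_
    show projH i ((∑ k, iotaH k (v.ofLp.1 k)) + ∑ r, iotaK r (v.ofLp.2 r)) = v.ofLp.1 i
    rw [map_add, map_sum, map_sum]
    rw [Finset.sum_eq_single i (fun j _ hj => projH_iotaH_ne (Ne.symm hj) (v.ofLp.1 j))
      (fun h => absurd (Finset.mem_univ i) h)]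
    simp [projH_iotaH_same, projH_iotaK]
  · refine PiLp.ext fun s => ?_
    show projK s ((∑ k, iotaH k (v.ofLp.1 k)) + ∑ r, iotaK r (v.ofLp.2 r)) = v.ofLp.2 s
    rw [map_add, map_sum, map_sum]
    rw [Finset.sum_eq_single s (fun r _ hr => projK_iotaK_ne (Ne.symm hr) (v.ofLp.2 r))
      (fun h => absurd (Finset.mem_univ s) h)]
    simp [projK_iotaK_same, projK_iotaH]

variable (T : ∀ k, H k →L[ℂ] H k) (R : ∀ r, K r →L[ℂ] K r)

@[simp] lemma combOp_fst (v : WithLp 2 (PiLp 2 H × PiLp 2 K)) (k : Fin N) :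
    (combOp T R v).ofLp.1 k = T k (v.ofLp.1 k) := rfl

@[simp] lemma combOp_snd (v : WithLp 2 (PiLp 2 H × PiLp 2 K)) (r : Fin M) :
    (combOp T R v).ofLp.2 r = R r (v.ofLp.2 r) := rfl

lemma combOp_iotaH (j : Fin N) (x : H j) :
    combOp T R (iotaH j x) = iotaH j (T j x) := by
  apply WithLp.ofLp_injective
  refine Prod.ext ?_ ?_
  · refine PiLp.ext fun m => ?_
    show T m ((Pi.single j x : ∀ i, H i) m) = (Pi.single j (T j x) : ∀ i, H i) m
    by_cases h : m = j
    · subst h; simp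
    · rw [Pi.single_eq_of_ne h, Pi.single_eq_of_ne h, map_zero]
  · refine PiLp.ext fun s => ?_
    show R s ((0 : PiLp 2 K) s) = (0 : PiLp 2 K) s
    simp

lemma combOp_iotaK (s : Fin M) (x : K s) :
    combOp T R (iotaK s x) = iotaK s (R s x) := by
  apply WithLp.ofLp_injective
  refine Prod.ext ?_ ?_
  · refine PiLp.ext fun m => ?_
    show T m ((0 : PiLp 2 H) m) = (0 : PiLp 2 H) m
    simp
  · refine PiLp.ext fun r => ?_
    show R r ((Pi.single s x : ∀ u, K u) r) = (Pi.single s (R s x) : ∀ u, K u) r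
    by_cases h : r = s
    · subst h; simp
    · rw [Pi.single_eq_of_ne h, Pi.single_eq_of_ne h, map_zero]

lemma combOp_mul (T' : ∀ k, H k →L[ℂ] H k) (R' : ∀ r, K r →L[ℂ] K r) :
    combOp T R * combOp T' R' = combOp (fun k => T k * T' k) (fun r => R r * R' r) := by
  ext v
  exact WithLp.ofLp_injective 2 (Prod.ext rfl rfl)

lemma combOp_one : combOp (fun k => (1 : H k →L[ℂ] H k)) (fun r => (1 : K r →L[ℂ] K r))
    = (1 : WithLp 2 (PiLp 2 H × PiLp 2 K) →L[ℂ] WithLp 2 (PiLp 2 H × PiLp 2 K)) := by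
  ext v
  exact WithLp.ofLp_injective 2 (Prod.ext rfl rfl)

lemma combOp_add (T' : ∀ k, H k →L[ℂ] H k) (R' : ∀ r, K r →L[ℂ] K r) :
    combOp T R + combOp T' R' = combOp (fun k => T k + T' k) (fun r => R r + R' r) := by
  ext v
  exact WithLp.ofLp_injective 2 (Prod.ext rfl rfl)

lemma combOp_smul (c : ℂ) :
    c • combOp T R = combOp (fun k => c • T k) (fun r => c • R r) := by
  ext v
  exact WithLp.ofLp_injective 2 (Prod.ext rfl rfl)

lemma combOp_adjoint :
    adjoint (combOp T R) = combOp (fun k => adjoint (T k)) (fun r => adjoint (R r)) := by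
  symm
  rw [eq_adjoint_iff]
  intro x y
  simp only [WithLp.prod_inner_apply, PiLp.inner_apply, combOp_fst, combOp_snd,
    adjoint_inner_left]

end StmtAux
end

section
open ContinuousLinearMap

namespace StmtAux

variable {N M : ℕ} {H : Fin N → Type*} [∀ k, NormedAddCommGroup (H k)]
    [∀ k, InnerProductSpace ℂ (H k)] [∀ k, FiniteDimensional ℂ (H k)]
    {K : Fin M → Type*} [∀ r, NormedAddCommGroup (K r)]
    [∀ r, InnerProductSpace ℂ (K r)] [∀ r, FiniteDimensional ℂ (K r)]

/-- The full block-diagonal star subalgebra `B(H₁) ⊕ ⋯ ⊕ B(K_M)`. -/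
noncomputable def blockDiagAlg :
    StarSubalgebra ℂ (WithLp 2 (PiLp 2 H × PiLp 2 K) →L[ℂ] WithLp 2 (PiLp 2 H × PiLp 2 K)) where
  carrier := {x | ∃ (T : ∀ k, H k →L[ℂ] H k) (R : ∀ r, K r →L[ℂ] K r), x = combOp T R}
  mul_mem' := by
    rintro _ _ ⟨T, R, rfl⟩ ⟨T', R', rfl⟩
    exact ⟨fun k => T k * T' k, fun r => R r * R' r, (combOp_mul T R T' R').symm⟩
  one_mem' := ⟨fun _ => 1, fun _ => 1, combOp_one.symm⟩
  add_mem' := by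
    rintro _ _ ⟨T, R, rfl⟩ ⟨T', R', rfl⟩
    exact ⟨fun k => T k + T' k, fun r => R r + R' r, (combOp_add T R T' R').symm⟩
  zero_mem' := ⟨0, 0, by
    ext v; apply WithLp.ofLp_injective; refine Prod.ext ?_ ?_ <;> refine PiLp.ext fun i => ?_ <;> simp [combOp]⟩
  algebraMap_mem' := by
    intro c
    refine ⟨fun k => c • 1, fun r => c • 1, ?_⟩
    rw [Algebra.algebraMap_eq_smul_one, ← combOp_one, combOp_smul]
  star_mem' := by
    rintro _ ⟨T, R, rfl⟩
    exact ⟨fun k => adjoint (T k), fun r => adjoint (R r), by rw [star_eq_adjoint, combOp_adjoint]⟩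

variable {Z : Type*} [AddCommGroup Z] [Module ℂ Z] [StarAddMonoid Z]
    [∀ k, Nontrivial (H k)] [∀ r, Nontrivial (K r)]
    (Γ : ∀ k : Fin N, Z →ₗ[ℂ] (H k →L[ℂ] H k))
    (Ω : ∀ r : Fin M, Z →ₗ[ℂ] (K r →L[ℂ] K r))

/-- Any operator commuting with all the generators is a block-diagonal operator with
scalar blocks. -/
lemma commutant_eq_scalar
    (hΓstar : ∀ k z, Γ k (star z) = star (Γ k z))
    (hΩstar : ∀ r z, Ω r (star z) = star (Ω r z))
    (hΓirr : ∀ k, ∀ T : H k →L[ℂ] H k,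
      (∀ z : Z, T * Γ k z = Γ k z * T) → ∃ c : ℂ, T = c • (1 : H k →L[ℂ] H k))
    (hΩirr : ∀ r, ∀ T : K r →L[ℂ] K r,
      (∀ z : Z, T * Ω r z = Ω r z * T) → ∃ c : ℂ, T = c • (1 : K r →L[ℂ] K r))
    (hsepΓΓ : ∀ j k : Fin N, j ≠ k → ∃ p : ℕ, ∃ zm : Matrix (Fin p) (Fin p) Z,
      ‖matOp (zm.map (Γ j))‖ ≠ ‖matOp (zm.map (Γ k))‖)
    (hsepΩΩ : ∀ r s : Fin M, r ≠ s → ∃ p : ℕ, ∃ zm : Matrix (Fin p) (Fin p) Z,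
      ‖matOp (zm.map (Ω r))‖ ≠ ‖matOp (zm.map (Ω s))‖)
    (hsepΓΩ : ∀ (k : Fin N) (r : Fin M), ∃ p : ℕ, ∃ zm : Matrix (Fin p) (Fin p) Z,
      ‖matOp (zm.map (Γ k))‖ ≠ ‖matOp (zm.map (Ω r))‖)
    (S : WithLp 2 (PiLp 2 H × PiLp 2 K) →L[ℂ] WithLp 2 (PiLp 2 H × PiLp 2 K))
    (hcomm : ∀ z : Z, combOp (fun k => Γ k z) (fun r => Ω r z) * S
      = S * combOp (fun k => Γ k z) (fun r => Ω r z)) :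
    ∃ (c : Fin N → ℂ) (d : Fin M → ℂ),
      S = combOp (fun k => c k • 1) (fun r => d r • 1) := by
  have hpt : ∀ (z : Z) v, combOp (fun k => Γ k z) (fun r => Ω r z) (S v)
      = S (combOp (fun k => Γ k z) (fun r => Ω r z) v) := by
    intro z v
    have h := congrFun (congrArg DFunLike.coe (hcomm z)) v
    simpa [mul_apply_eq_comp] using h
  -- the four kinds of intertwining relations for the blocks of S
  have hHH : ∀ (i j : Fin N) (z : Z) (x : H j),
      Γ i z (projH i (S (iotaH j x))) = projH i (S (iotaH j (Γ j z x))) := by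
    intro i j z x
    have h := congrArg (projH i) (hpt z (iotaH j x))
    rw [combOp_iotaH] at h
    exact h
  have hKK : ∀ (r s : Fin M) (z : Z) (x : K s),
      Ω r z (projK r (S (iotaK s x))) = projK r (S (iotaK s (Ω s z x))) := by
    intro r s z x
    have h := congrArg (projK r) (hpt z (iotaK s x))
    rw [combOp_iotaK] at h
    exact h
  have hHK : ∀ (i : Fin N) (s : Fin M) (z : Z) (x : K s),
      Γ i z (projH i (S (iotaK s x))) = projH i (S (iotaK s (Ω s z x))) := by
    intro i s z x
    have h := congrArg (projH i) (hpt z (iotaK s x))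
    rw [combOp_iotaK] at h
    exact h
  have hKH : ∀ (r : Fin M) (j : Fin N) (z : Z) (x : H j),
      Ω r z (projK r (S (iotaH j x))) = projK r (S (iotaH j (Γ j z x))) := by
    intro r j z x
    have h := congrArg (projK r) (hpt z (iotaH j x))
    rw [combOp_iotaH] at h
    exact h
  -- off-diagonal blocks vanish
  have hvanHH : ∀ i j : Fin N, i ≠ j → (projH i ∘L S ∘L iotaH j) = 0 := by
    intro i j hij
    exact schur_vanish (Γ i) (Γ j) (hΓstar i) (hΓstar j) (hΓirr i) (hΓirr j)
      (hsepΓΓ i j hij) _ (fun z x => by simpa [comp_apply] using hHH i j z x)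
  have hvanKK : ∀ r s : Fin M, r ≠ s → (projK r ∘L S ∘L iotaK s) = 0 := by
    intro r s hrs
    exact schur_vanish (Ω r) (Ω s) (hΩstar r) (hΩstar s) (hΩirr r) (hΩirr s)
      (hsepΩΩ r s hrs) _ (fun z x => by simpa [comp_apply] using hKK r s z x)
  have hvanHK : ∀ (i : Fin N) (s : Fin M), (projH i ∘L S ∘L iotaK s) = 0 := by
    intro i s
    exact schur_vanish (Γ i) (Ω s) (hΓstar i) (hΩstar s) (hΓirr i) (hΩirr s)
      (hsepΓΩ i s) _ (fun z x => by simpa [comp_apply] using hHK i s z x)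
  have hvanKH : ∀ (r : Fin M) (j : Fin N), (projK r ∘L S ∘L iotaH j) = 0 := by
    intro r j
    obtain ⟨p, zm, hne⟩ := hsepΓΩ j r
    exact schur_vanish (Ω r) (Γ j) (hΩstar r) (hΓstar j) (hΩirr r) (hΓirr j)
      ⟨p, zm, hne.symm⟩ _ (fun z x => by simpa [comp_apply] using hKH r j z x)
  -- diagonal blocks are scalar
  have hdiagH : ∀ i : Fin N, ∃ c : ℂ,
      (projH i ∘L S ∘L iotaH i) = c • (1 : H i →L[ℂ] H i) := by
    intro i
    refine hΓirr i _ ?_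
    intro z
    ext x
    simpa [mul_apply_eq_comp, comp_apply] using (hHH i i z x).symm
  have hdiagK : ∀ r : Fin M, ∃ d : ℂ,
      (projK r ∘L S ∘L iotaK r) = d • (1 : K r →L[ℂ] K r) := by
    intro r
    refine hΩirr r _ ?_
    intro z
    ext x
    simpa [mul_apply_eq_comp, comp_apply] using (hKK r r z x).symm
  choose c hc using hdiagH
  choose d hd using hdiagK
  refine ⟨c, d, ?_⟩
  ext v
  apply WithLp.ofLp_injective
  refine Prod.ext ?_ ?_
  · refine PiLp.ext fun i => ?_
    show projH i (S v) = (combOp (fun k => c k • 1) (fun r => d r • 1) v).ofLp.1 i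
    rw [combOp_fst]
    conv_lhs => rw [← decompV v]
    rw [map_add, map_sum, map_sum, map_add, map_sum, map_sum]
    have hz : ∀ r : Fin M, projH i (S (iotaK r (v.ofLp.2 r))) = 0 := by
      intro r
      have h := congrFun (congrArg DFunLike.coe (hvanHK i r)) (v.ofLp.2 r)
      simpa [comp_apply] using h
    rw [Finset.sum_eq_single i (fun j _ hj => by
        have h := congrFun (congrArg DFunLike.coe (hvanHH i j (Ne.symm hj))) (v.ofLp.1 j)
        simpa [comp_apply] using h)
      (fun h => absurd (Finset.mem_univ i) h)]
    have h := congrFun (congrArg DFunLike.coe (hc i)) (v.ofLp.1 i)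
    simp only [comp_apply, smul_apply, one_apply] at h
    simp only [hz, h]; simp
  · refine PiLp.ext fun s => ?_
    show projK s (S v) = (combOp (fun k => c k • 1) (fun r => d r • 1) v).ofLp.2 s
    rw [combOp_snd]
    conv_lhs => rw [← decompV v]
    rw [map_add, map_sum, map_sum, map_add, map_sum, map_sum]
    have hz : ∀ j : Fin N, projK s (S (iotaH j (v.ofLp.1 j))) = 0 := by
      intro j
      have h := congrFun (congrArg DFunLike.coe (hvanKH s j)) (v.ofLp.1 j)
      simpa [comp_apply] using h
    rw [Finset.sum_eq_single s (fun r _ hr => by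
        have h := congrFun (congrArg DFunLike.coe (hvanKK s r (Ne.symm hr))) (v.ofLp.2 r)
        simpa [comp_apply] using h)
      (fun h => absurd (Finset.mem_univ s) h)]
    have h := congrFun (congrArg DFunLike.coe (hd s)) (v.ofLp.2 s)
    simp only [comp_apply, smul_apply, one_apply] at h
    simp only [hz, h]; simp

end StmtAux
end

set_option maxHeartbeats 1000000 in
open StmtAux in
/-- Lemma 6.1 of the paper.  Given unital self-adjoint linear maps
`Γ_k : Z → B(H_k)` and `Ω_r : Z → B(K_r)` with irreducible ranges such that any two of
the `M + N` coordinate maps are distinguished by the norm of some matrix over `Z`, the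
C*-algebra generated by `S_{Γ,Ω} = {Γ₁(z) ⊕ ⋯ ⊕ Γ_N(z) ⊕ Ω₁(z) ⊕ ⋯ ⊕ Ω_M(z) : z ∈ Z}`
is the full direct sum `B(H₁) ⊕ ⋯ ⊕ B(H_N) ⊕ B(K₁) ⊕ ⋯ ⊕ B(K_M)`. -/
theorem starAdjoin_SGammaOmega_eq_directSum
    {Z : Type*} [AddCommGroup Z] [Module ℂ Z] [StarAddMonoid Z] [StarModule ℂ Z]
    [FiniteDimensional ℂ Z] (e : Z) (he : star e = e) (hene : e ≠ 0)
    {N M : ℕ} {H : Fin N → Type*} [∀ k, NormedAddCommGroup (H k)]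
    [∀ k, InnerProductSpace ℂ (H k)] [∀ k, FiniteDimensional ℂ (H k)]
    [∀ k, Nontrivial (H k)]
    {K : Fin M → Type*} [∀ r, NormedAddCommGroup (K r)]
    [∀ r, InnerProductSpace ℂ (K r)] [∀ r, FiniteDimensional ℂ (K r)]
    [∀ r, Nontrivial (K r)]
    (Γ : ∀ k : Fin N, Z →ₗ[ℂ] (H k →L[ℂ] H k))
    (Ω : ∀ r : Fin M, Z →ₗ[ℂ] (K r →L[ℂ] K r))
    (hΓstar : ∀ k z, Γ k (star z) = star (Γ k z))
    (hΩstar : ∀ r z, Ω r (star z) = star (Ω r z))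
    (hΓunit : ∀ k, Γ k e = 1) (hΩunit : ∀ r, Ω r e = 1)
    (hΓirr : ∀ k, ∀ T : H k →L[ℂ] H k,
      (∀ z : Z, T * Γ k z = Γ k z * T) → ∃ c : ℂ, T = c • (1 : H k →L[ℂ] H k))
    (hΩirr : ∀ r, ∀ T : K r →L[ℂ] K r,
      (∀ z : Z, T * Ω r z = Ω r z * T) → ∃ c : ℂ, T = c • (1 : K r →L[ℂ] K r))
    (hsepΓΓ : ∀ j k : Fin N, j ≠ k → ∃ p : ℕ, ∃ zm : Matrix (Fin p) (Fin p) Z,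
      ‖matOp (zm.map (Γ j))‖ ≠ ‖matOp (zm.map (Γ k))‖)
    (hsepΩΩ : ∀ r s : Fin M, r ≠ s → ∃ p : ℕ, ∃ zm : Matrix (Fin p) (Fin p) Z,
      ‖matOp (zm.map (Ω r))‖ ≠ ‖matOp (zm.map (Ω s))‖)
    (hsepΓΩ : ∀ (k : Fin N) (r : Fin M), ∃ p : ℕ, ∃ zm : Matrix (Fin p) (Fin p) Z,
      ‖matOp (zm.map (Γ k))‖ ≠ ‖matOp (zm.map (Ω r))‖) :
    ((StarAlgebra.adjoin ℂ
        {x : WithLp 2 (PiLp 2 H × PiLp 2 K) →L[ℂ] WithLp 2 (PiLp 2 H × PiLp 2 K) |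
          ∃ z : Z, x = combOp (fun k => Γ k z) (fun r => Ω r z)} :
        StarSubalgebra ℂ _) : Set _)
      = {x : WithLp 2 (PiLp 2 H × PiLp 2 K) →L[ℂ] WithLp 2 (PiLp 2 H × PiLp 2 K) |
          ∃ (T : ∀ k, H k →L[ℂ] H k) (R : ∀ r, K r →L[ℂ] K r), x = combOp T R} := by
  classical
  apply subset_antisymm
  · intro x hx
    have hx' : x ∈ (blockDiagAlg : StarSubalgebra ℂ
        (WithLp 2 (PiLp 2 H × PiLp 2 K) →L[ℂ] WithLp 2 (PiLp 2 H × PiLp 2 K))) := by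
      refine StarAlgebra.adjoin_le ?_ hx
      rintro _ ⟨z, rfl⟩
      exact ⟨fun k => Γ k z, fun r => Ω r z, rfl⟩
    exact hx'
  · rintro x ⟨T, R, rfl⟩
    have : combOp T R ∈ StarAlgebra.adjoin ℂ
        {x : WithLp 2 (PiLp 2 H × PiLp 2 K) →L[ℂ] WithLp 2 (PiLp 2 H × PiLp 2 K) |
          ∃ z : Z, x = combOp (fun k => Γ k z) (fun r => Ω r z)} := by
      apply dct
      intro S hScomm
      have hgen : ∀ z : Z, combOp (fun k => Γ k z) (fun r => Ω r z) * S
          = S * combOp (fun k => Γ k z) (fun r => Ω r z) := by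
        intro z
        exact hScomm _ (StarAlgebra.subset_adjoin ℂ _ ⟨z, rfl⟩)
      obtain ⟨c, d, rfl⟩ := commutant_eq_scalar Γ Ω hΓstar hΩstar hΓirr hΩirr
        hsepΓΓ hsepΩΩ hsepΓΩ S hgen
      rw [combOp_mul, combOp_mul]
      congr 1
      · funext k
        simp [mul_smul_comm, smul_mul_assoc]
      · funext r
        simp [mul_smul_comm, smul_mul_assoc]
    exact this
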